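/- Let 2 ≤ d1 ≤ d2, d = d1 + d2, and consider the line arrangement in ℙ²(ℂ) given by f = x·(y − z)·∏_{i=1}^{d1−1}(x − i y)·∏_{j=2}^{d2}(x − j z) = 0. Then: the point (0:0:1) has multiplicity d1, the point (0:1:0) has multiplicity d2, there are exactly d1 − 2 triple points, all lying on the line y = z (namely the points (i:1:1) for 2 ≤ i ≤ d1 − 1), and all other singular points are double points. -/

import Mathlib

open scoped Classical

/-- The number of linear factors of
`f = x (y - z) ∏_{i=1}^{d1-1}(x - i y) ∏_{j=2}^{d2}(x - j z)`
vanishing at the vector `v`, i.e. the multiplicity of the corresponding projective point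
with respect to this line arrangement. -/
noncomputable def arrMult2 (d1 d2 : ℕ) (v : Fin 3 → ℂ) : ℕ :=
  (if v 0 = 0 then 1 else 0) + (if v 1 = v 2 then 1 else 0)
    + ((Finset.range (d1 - 1)).filter (fun i => v 0 = ((i : ℂ) + 1) * v 1)).card
    + ((Finset.range (d2 - 1)).filter (fun j => v 0 = ((j : ℂ) + 2) * v 2)).card

lemma aux_conv (n : ℕ) (p : ℂ → Prop) :
    ((do let a ← Finset.range n; pure ((a:ℕ) : ℂ)).filter p).card
      = ((Finset.range n).filter (fun a : ℕ => p a)).card := by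
  have h1 : (do let a ← Finset.range n; pure ((a:ℕ) : ℂ)) = (Finset.range n).image (Nat.cast) := by
    ext x; simp
  rw [h1, Finset.filter_image, Finset.card_image_of_injective _ Nat.cast_injective]

lemma arrMult2_eq (d1 d2 : ℕ) (v : Fin 3 → ℂ) :
    arrMult2 d1 d2 v =
      (if v 0 = 0 then 1 else 0) + (if v 1 = v 2 then 1 else 0)
        + ((Finset.range (d1 - 1)).filter (fun i : ℕ => v 0 = ((i : ℂ) + 1) * v 1)).card
        + ((Finset.range (d2 - 1)).filter (fun j : ℕ => v 0 = ((j : ℂ) + 2) * v 2)).card := by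
  unfold arrMult2
  rw [aux_conv (d1 - 1) (fun i : ℂ => v 0 = (i + 1) * v 1),
    aux_conv (d2 - 1) (fun j : ℂ => v 0 = (j + 2) * v 2)]

lemma aux_card_le (n : ℕ) (a b e : ℂ) (hb : b ≠ 0) :
    ((Finset.range n).filter (fun i : ℕ => a = ((i : ℂ) + e) * b)).card ≤ 1 := by
  apply Finset.card_le_one.mpr
  intro x hx y hy
  simp only [Finset.mem_filter] at hx hy
  have h := mul_right_cancel₀ hb (hx.2.symm.trans hy.2)
  have h2 : (x : ℂ) = y := by linear_combination h
  exact_mod_cast h2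

lemma aux_filter_singleton (n : ℕ) (a b e : ℂ) (hb : b ≠ 0) (m : ℕ) (hm : m < n)
    (ha : a = ((m : ℂ) + e) * b) :
    (Finset.range n).filter (fun i : ℕ => a = ((i : ℂ) + e) * b) = ({m} : Finset ℕ) := by
  ext k
  simp only [Finset.mem_filter, Finset.mem_range, Finset.mem_singleton]
  constructor
  · rintro ⟨hk, h⟩
    have h3 := mul_right_cancel₀ hb (h.symm.trans ha)
    have h2 : (k : ℂ) = m := by linear_combination h3
    exact_mod_cast h2
  · rintro rfl
    exact ⟨hm, ha⟩

lemma aux_filter_empty (n : ℕ) (a b e : ℂ) (h : ∀ i : ℕ, a ≠ ((i : ℂ) + e) * b) :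
    (Finset.range n).filter (fun i : ℕ => a = ((i : ℂ) + e) * b) = ∅ := by
  ext k
  simp only [Finset.mem_filter, Finset.notMem_empty, iff_false, not_and]
  exact fun _ => h k

lemma aux_cast_pos (i : ℕ) (e : ℕ) : ((i : ℂ) + (e + 1 : ℕ)) ≠ 0 := by
  have h0 : ((i + (e + 1) : ℕ) : ℂ) ≠ 0 := Nat.cast_ne_zero.mpr (Nat.succ_ne_zero _)
  intro h
  exact h0 (by push_cast; push_cast at h; linear_combination h)

theorem stmt_10 (d1 d2 : ℕ) (h1 : 2 ≤ d1) (h12 : d1 ≤ d2) :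
    -- the point (0:0:1) has multiplicity d1 and the point (0:1:0) has multiplicity d2
    arrMult2 d1 d2 ![0, 0, 1] = d1 ∧
    arrMult2 d1 d2 ![0, 1, 0] = d2 ∧
    -- the d1 - 2 triple points (i:1:1), 2 ≤ i ≤ d1 - 1, all on the line y = z
    (∀ i ∈ Finset.Icc 2 (d1 - 1), arrMult2 d1 d2 ![(i : ℂ), 1, 1] = 3) ∧
    -- any point of multiplicity ≥ 3 is one of the points above;
    -- in particular all other singular points are double points
    (∀ v : Fin 3 → ℂ, v ≠ 0 → 3 ≤ arrMult2 d1 d2 v →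
      (∃ t : ℂ, v = t • ![0, 0, 1]) ∨ (∃ t : ℂ, v = t • ![0, 1, 0]) ∨
      ∃ i ∈ Finset.Icc 2 (d1 - 1), ∃ t : ℂ, v = t • ![(i : ℂ), 1, 1]) := by
  have hd2 : 2 ≤ d2 := le_trans h1 h12
  have hc1 : ∀ i : ℕ, ((i : ℂ) + 1) ≠ 0 := by
    intro i; have := aux_cast_pos i 0; push_cast at this; exact this
  have hc2 : ∀ i : ℕ, ((i : ℂ) + 2) ≠ 0 := by
    intro i; have := aux_cast_pos i 1; push_cast at this; exact this
  refine ⟨?_, ?_, ?_, ?_⟩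
  · -- (0,0,1)
    rw [arrMult2_eq]
    simp only [Matrix.cons_val_zero, Matrix.cons_val_one, Matrix.head_cons,
      Matrix.cons_val_two, Matrix.tail_cons]
    have e1 : (Finset.range (d1 - 1)).filter (fun i : ℕ => (0 : ℂ) = ((i : ℂ) + 1) * 0)
        = Finset.range (d1 - 1) := by
      apply Finset.filter_true_of_mem; intro i _; ring
    have e2 : (Finset.range (d2 - 1)).filter (fun j : ℕ => (0 : ℂ) = ((j : ℂ) + 2) * 1) = ∅ :=
      aux_filter_empty _ _ _ _ (fun j h => hc2 j (by linear_combination -h))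
    erw [e1, e2]
    simp only [if_pos rfl, Finset.card_range, Finset.card_empty]
    have hne : ¬ ((0:ℂ) = 1) := by norm_num
    rw [if_neg hne]
    simp only [if_true]
    omega
  · -- (0,1,0)
    rw [arrMult2_eq]
    simp only [Matrix.cons_val_zero, Matrix.cons_val_one, Matrix.head_cons,
      Matrix.cons_val_two, Matrix.tail_cons]
    have e1 : (Finset.range (d1 - 1)).filter (fun i : ℕ => (0 : ℂ) = ((i : ℂ) + 1) * 1) = ∅ :=
      aux_filter_empty _ _ _ _ (fun i h => hc1 i (by linear_combination -h))
    have e2 : (Finset.range (d2 - 1)).filter (fun j : ℕ => (0 : ℂ) = ((j : ℂ) + 2) * 0)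
        = Finset.range (d2 - 1) := by
      apply Finset.filter_true_of_mem; intro j _; ring
    erw [e1, e2]
    simp only [if_pos rfl, Finset.card_range, Finset.card_empty]
    have hne : ¬ ((1:ℂ) = 0) := by norm_num
    rw [if_neg hne]
    simp only [if_true]
    omega
  · -- triple points
    intro i hi
    rw [Finset.mem_Icc] at hi
    obtain ⟨hi2, hi1⟩ := hi
    rw [arrMult2_eq]
    simp only [Matrix.cons_val_zero, Matrix.cons_val_one, Matrix.head_cons,
      Matrix.cons_val_two, Matrix.tail_cons]
    have hne : ((i : ℂ)) ≠ 0 := Nat.cast_ne_zero.mpr (by omega)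
    erw [if_neg hne]
    have e1 : (Finset.range (d1 - 1)).filter (fun k : ℕ => (i : ℂ) = ((k : ℂ) + 1) * 1)
        = ({i - 1} : Finset ℕ) := by
      apply aux_filter_singleton _ _ _ _ one_ne_zero _ (by omega)
      have hcst : ((i - 1 : ℕ) : ℂ) = (i : ℂ) - 1 := by
        push_cast [Nat.cast_sub (by omega : 1 ≤ i)]; ring
      rw [hcst]; ring
    have e2 : (Finset.range (d2 - 1)).filter (fun k : ℕ => (i : ℂ) = ((k : ℂ) + 2) * 1)
        = ({i - 2} : Finset ℕ) := by
      apply aux_filter_singleton _ _ _ _ one_ne_zero _ (by omega)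
      have hcst : ((i - 2 : ℕ) : ℂ) = (i : ℂ) - 2 := by
        push_cast [Nat.cast_sub (by omega : 2 ≤ i)]; ring
      rw [hcst]; ring
    erw [e1, e2]
    simp
  · -- converse
    intro v hv hmul
    rw [arrMult2_eq] at hmul
    set a := v 0 with ha'
    set b := v 1 with hb'
    set c := v 2 with hc'
    by_cases ha : a = 0
    · by_cases hb : b = 0
      · by_cases hc : c = 0
        · exfalso; apply hv; funext k; fin_cases k
          · exact ha
          · exact hb
          · exact hc
        · left
          refine ⟨c, ?_⟩
          funext k; fin_cases k <;>
            simp [← ha', ← hb', ← hc', ha, hb]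
      · -- b ≠ 0 ; show c = 0
        by_cases hc : c = 0
        · right; left
          refine ⟨b, ?_⟩
          funext k; fin_cases k <;>
            simp [← ha', ← hb', ← hc', ha, hc]
        · exfalso
          have e1 : (Finset.range (d1 - 1)).filter (fun i : ℕ => a = ((i : ℂ) + 1) * b) = ∅ :=
            aux_filter_empty _ _ _ _ (fun i h =>
              (mul_ne_zero (hc1 i) hb) (by linear_combination -h + ha))
          have e2 : (Finset.range (d2 - 1)).filter (fun j : ℕ => a = ((j : ℂ) + 2) * c) = ∅ :=
            aux_filter_empty _ _ _ _ (fun j h =>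
              (mul_ne_zero (hc2 j) hc) (by linear_combination -h + ha))
          rw [e1, e2, if_pos ha] at hmul
          simp only [Finset.card_empty] at hmul
          by_cases hbc : b = c
          · rw [if_pos hbc] at hmul; omega
          · rw [if_neg hbc] at hmul; omega
    · -- a ≠ 0
      rw [if_neg ha] at hmul
      have hb : b ≠ 0 := by
        intro hb
        have e1 : (Finset.range (d1 - 1)).filter (fun i : ℕ => a = ((i : ℂ) + 1) * b) = ∅ :=
          aux_filter_empty _ _ _ _ (fun i h => ha (by rw [h, hb]; ring))
        rw [e1] at hmul
        simp only [Finset.card_empty] at hmul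
        by_cases hc : c = 0
        · have e2 : (Finset.range (d2 - 1)).filter (fun j : ℕ => a = ((j : ℂ) + 2) * c) = ∅ :=
            aux_filter_empty _ _ _ _ (fun j h => ha (by rw [h, hc]; ring))
          rw [e2] at hmul
          simp only [Finset.card_empty] at hmul
          split_ifs at hmul <;> omega
        · have hbc : b ≠ c := by rw [hb]; exact fun h => hc h.symm
          have hk2 := aux_card_le (d2 - 1) a c 2 hc
          rw [if_neg hbc] at hmul
          omega
      have hc : c ≠ 0 := by
        intro hc
        have e2 : (Finset.range (d2 - 1)).filter (fun j : ℕ => a = ((j : ℂ) + 2) * c) = ∅ :=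
          aux_filter_empty _ _ _ _ (fun j h => ha (by rw [h, hc]; ring))
        rw [e2] at hmul
        simp only [Finset.card_empty] at hmul
        have hbc : b ≠ c := by rw [hc]; exact hb
        have hk1 := aux_card_le (d1 - 1) a b 1 hb
        rw [if_neg hbc] at hmul
        omega
      have k1 := aux_card_le (d1 - 1) a b 1 hb
      have k2 := aux_card_le (d2 - 1) a c 2 hc
      have hbc : b = c := by
        by_contra hbc
        rw [if_neg hbc] at hmul
        omega
      rw [if_pos hbc] at hmul
      obtain ⟨i, hi⟩ := Finset.card_pos.mp (by omega : 0 < ((Finset.range (d1 - 1)).filter (fun i : ℕ => a = ((i : ℂ) + 1) * b)).card)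
      obtain ⟨j, hj⟩ := Finset.card_pos.mp (by omega : 0 < ((Finset.range (d2 - 1)).filter (fun j : ℕ => a = ((j : ℂ) + 2) * c)).card)
      simp only [Finset.mem_filter, Finset.mem_range] at hi hj
      obtain ⟨hiR, hie⟩ := hi
      obtain ⟨hjR, hje⟩ := hj
      -- (i+1) b = (j+2) c = (j+2) b  ⇒ i = j + 1
      have heq : (i : ℂ) + 1 = (j : ℂ) + 2 := by
        have h4 := hie.symm.trans (hje.trans (by rw [← hbc]))
        exact mul_right_cancel₀ hb h4
      have hij : i = j + 1 := by
        have h5 : (i : ℂ) = ((j + 1 : ℕ) : ℂ) := by push_cast; linear_combination heq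
        exact_mod_cast h5
      right; right
      refine ⟨i + 1, ?_, b, ?_⟩
      · rw [Finset.mem_Icc]; omega
      · funext k; fin_cases k
        · show a = (b • ![(((i + 1 : ℕ)) : ℂ), 1, 1]) 0
          rw [Pi.smul_apply, Matrix.cons_val_zero, hie, smul_eq_mul]
          push_cast; ring
        · simp [← hb']
        · simp [← hc', ← hbc]
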